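/- If a topological space X is an absolute neighborhood extensor for the class of compact Hausdorff spaces, then X is an absolute neighborhood extensor for the class of k_ω-spaces: for every k_ω-space A, every closed subset B ⊆ A, and every continuous map f : B → X, there is an open neighborhood N of B in A and a continuous map g : N → X extending f. -/

import Mathlib

open Set Topology TopologicalSpace

universe u v

/-- A `k_ω`-sequence for `X`. -/
def IsKOmegaSeq (X : Type v) [TopologicalSpace X] (C : ℕ → Set X) : Prop :=
  (∀ n, IsCompact (C n)) ∧ Monotone C ∧ (⋃ n, C n) = Set.univ ∧
    ∀ U : Set X, IsOpen U ↔ ∀ n, IsOpen ((Subtype.val ⁻¹' U : Set (C n)))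

/-- A `k_ω`-space: a Hausdorff space which is the direct limit of a `k_ω`-sequence. -/
def IsKOmega (X : Type v) [TopologicalSpace X] : Prop :=
  T2Space X ∧ ∃ C : ℕ → Set X, IsKOmegaSeq X C

/-- A space is submetrizable if its topology is finer than some metrizable topology. -/
def Submetrizable (X : Type v) [t : TopologicalSpace X] : Prop :=
  ∃ m : TopologicalSpace X, t ≤ m ∧ @MetrizableSpace X m

/-- `X` is an absolute neighborhood extensor for the class of spaces satisfying `P`. -/
def IsANEFor (X : Type u) [TopologicalSpace X]
    (P : (A : Type v) → TopologicalSpace A → Prop) : Prop :=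
  ∀ (A : Type v) [tA : TopologicalSpace A], P A tA → ∀ B : Set A, IsClosed B →
    ∀ f : B → X, Continuous f → ∃ N : Set A, IsOpen N ∧ B ⊆ N ∧
      ∃ g : N → X, Continuous g ∧ ∀ (a : A) (hB : a ∈ B) (hN : a ∈ N), g ⟨a, hN⟩ = f ⟨a, hB⟩

/-- `X` is an `ANR(k_ω)`-space: whenever `X` is embedded as a closed subspace of a
`k_ω`-space, it is a retract of a neighborhood. -/
def IsANRkw (X : Type u) [TopologicalSpace X] : Prop :=
  IsKOmega X ∧ ∀ (Y : Type v) [TopologicalSpace Y], IsKOmega Y →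
    ∀ e : X → Y, IsClosedEmbedding e →
      ∃ N : Set Y, (∀ y ∈ Set.range e, N ∈ nhds y) ∧
        ∃ r : N → Y, Continuous r ∧ (∀ z : N, r z ∈ Set.range e) ∧
          ∀ z : N, (z : Y) ∈ Set.range e → r z = (z : Y)

lemma continuousOn_union_of_isClosed' {X : Type u} [TopologicalSpace X]
    {A : Type v} [TopologicalSpace A] {f : A → X}
    {s t : Set A} (hs : IsClosed s) (ht : IsClosed t)
    (hfs : ContinuousOn f s) (hft : ContinuousOn f t) : ContinuousOn f (s ∪ t) := by
  rintro a (ha | ha)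
  · refine (hfs a ha).union ?_
    by_cases hat : a ∈ t
    · exact hft a hat
    · exact continuousWithinAt_of_notMem_closure (by rwa [ht.closure_eq])
  · refine ContinuousWithinAt.union ?_ (hft a ha)
    by_cases has : a ∈ s
    · exact hfs a has
    · exact continuousWithinAt_of_notMem_closure (by rwa [hs.closure_eq])

lemma seq_construct' {α : Type*} {Good : ℕ → α → Prop} {R : ℕ → α → α → Prop}
    (a0 : α) (h0 : Good 0 a0)
    (step : ∀ n a, Good n a → ∃ b, Good (n+1) b ∧ R n a b) :
    ∃ u : ℕ → α, u 0 = a0 ∧ (∀ n, Good n (u n)) ∧ ∀ n, R n (u n) (u (n+1)) := by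
  choose F hF1 hF2 using step
  let u : ∀ n : ℕ, {a : α // Good n a} :=
    fun n => Nat.rec ⟨a0, h0⟩ (fun m ih => ⟨F m ih.1 ih.2, hF1 m ih.1 ih.2⟩) n
  exact ⟨fun n => (u n).1, rfl, fun n => (u n).2, fun n => hF2 n (u n).1 (u n).2⟩

lemma step_aux' {X : Type u} [TopologicalSpace X] {A : Type v} [TopologicalSpace A] [T2Space A]
    (h : IsANEFor.{u, v} X fun A tA => @CompactSpace A tA ∧ @T2Space A tA)
    {B : Set A} (hB : IsClosed B) {F : A → X} (hF : ContinuousOn F B)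
    {K : Set A} (hK : IsCompact K)
    {D : Set A} (hDc : IsCompact D) (hDK : D ⊆ K)
    {g : A → X} (hg : ContinuousOn g D) (hgF : Set.EqOn g F (B ∩ D)) :
    ∃ (D' : Set A) (g' : A → X) (U : Set A),
      IsCompact D' ∧ D' ⊆ K ∧ ContinuousOn g' D' ∧ Set.EqOn g' F (B ∩ D') ∧
      IsOpen U ∧ (B ∩ K) ∪ D ⊆ U ∧ U ∩ K ⊆ D' ∧ Set.EqOn g' g D := by
  classical
  haveI : CompactSpace ↥K := isCompact_iff_compactSpace.mp hK
  set E : Set A := (B ∩ K) ∪ D with hE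
  have hEK : E ⊆ K := union_subset inter_subset_right hDK
  have hEc : IsClosed E := (hB.inter hK.isClosed).union hDc.isClosed
  set h' : A → X := fun a => if a ∈ D then g a else F a with hh'
  have hh'D : Set.EqOn h' g D := fun a ha => if_pos ha
  have hh'B : Set.EqOn h' F (B ∩ K) := by
    intro a ha
    by_cases had : a ∈ D
    · simp only [h', if_pos had]; exact hgF ⟨ha.1, had⟩
    · simp only [h', if_neg had]
  have hcont : ContinuousOn h' E :=
    continuousOn_union_of_isClosed' (hB.inter hK.isClosed) hDc.isClosed
      ((hF.mono inter_subset_left).congr hh'B) (hg.congr hh'D)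
  obtain ⟨N', hN'open, hB'N', g', hg'c, hg'ext⟩ :=
    h (↥K) ⟨inferInstance, inferInstance⟩ (Subtype.val ⁻¹' E)
      (hEc.preimage continuous_subtype_val)
      (fun z => h' z.1.1)
      (hcont.comp_continuous (continuous_subtype_val.comp continuous_subtype_val)
        (fun z => z.2))
  obtain ⟨W, hWopen, hB'W, hclWN'⟩ :=
    normal_exists_closure_subset (hEc.preimage continuous_subtype_val) hN'open hB'N'
  obtain ⟨U, hUopen, hUW⟩ := isOpen_induced_iff.mp hWopen
  set D' : Set A := Subtype.val '' closure W with hD'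
  have hD'K : D' ⊆ K := by rintro a ⟨z, _, rfl⟩; exact z.2
  have hD'cl : ∀ (a : A) (ha : a ∈ D'), (⟨a, hD'K ha⟩ : ↥K) ∈ closure W := by
    rintro a ⟨z, hz, rfl⟩; exact hz
  have hED' : E ⊆ D' := fun a ha => ⟨⟨a, hEK ha⟩, subset_closure (hB'W ha), rfl⟩
  set g2 : A → X := fun a =>
    if hx : ∃ hK : a ∈ K, (⟨a, hK⟩ : ↥K) ∈ N' then g' ⟨⟨a, hx.choose⟩, hx.choose_spec⟩
    else F a with hg2
  have hg2eq : ∀ (a : A) (ha : a ∈ K) (hn : (⟨a, ha⟩ : ↥K) ∈ N'),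
      g2 a = g' ⟨⟨a, ha⟩, hn⟩ := by
    intro a ha hn
    have hx : ∃ hK : a ∈ K, (⟨a, hK⟩ : ↥K) ∈ N' := ⟨ha, hn⟩
    simp only [g2, dif_pos hx]
  have hg2E : ∀ (a : A) (ha : a ∈ E), g2 a = h' a := by
    intro a ha
    have haK := hEK ha
    have hn : (⟨a, haK⟩ : ↥K) ∈ N' := hclWN' (subset_closure (hB'W ha))
    rw [hg2eq a haK hn]
    exact hg'ext ⟨a, haK⟩ ha hn
  have hg2c : ContinuousOn g2 D' := by
    rw [continuousOn_iff_continuous_restrict]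
    have hre : D'.domRestrict g2 = fun z : D' =>
        g' ⟨⟨z.1, hD'K z.2⟩, hclWN' (hD'cl z.1 z.2)⟩ := by
      funext z
      exact hg2eq z.1 (hD'K z.2) (hclWN' (hD'cl z.1 z.2))
    rw [hre]
    exact hg'c.comp ((continuous_subtype_val.subtype_mk _).subtype_mk _)
  refine ⟨D', g2, U, ?_, hD'K, hg2c, ?_, hUopen, ?_, ?_, ?_⟩
  · exact (isClosed_closure.isCompact).image continuous_subtype_val
  · intro a ha
    have haE : a ∈ E := Or.inl ⟨ha.1, hD'K ha.2⟩
    rw [hg2E a haE]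
    exact hh'B ⟨ha.1, hD'K ha.2⟩
  · intro a ha
    have : (⟨a, hEK ha⟩ : ↥K) ∈ Subtype.val ⁻¹' U := by rw [hUW]; exact hB'W ha
    exact this
  · rintro a ⟨haU, haK⟩
    have : (⟨a, haK⟩ : ↥K) ∈ W := by rw [← hUW]; exact haU
    exact ⟨⟨a, haK⟩, subset_closure this, rfl⟩
  · intro a ha
    rw [hg2E a (Or.inr ha)]
    exact hh'D ha

/-- An ANE for the class of compact Hausdorff spaces is an ANE for the class of `k_ω`-spaces:
every continuous map to `X` from a closed subset `B` of a `k_ω`-space `A` extends continuously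
over an open neighborhood of `B` in `A`. -/
theorem ANE_compact_Hausdorff_to_ANE_kOmega
    (X : Type u) [TopologicalSpace X]
    (h : IsANEFor.{u, v} X fun A tA => @CompactSpace A tA ∧ @T2Space A tA) :
    ∀ (A : Type v) [TopologicalSpace A], IsKOmega A → ∀ B : Set A, IsClosed B →
      ∀ f : B → X, Continuous f → ∃ N : Set A, IsOpen N ∧ B ⊆ N ∧
        ∃ g : N → X, Continuous g ∧
          ∀ (a : A) (hB : a ∈ B) (hN : a ∈ N), g ⟨a, hN⟩ = f ⟨a, hB⟩ := by
  intro A tA hA B hBc f hf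
  obtain ⟨hT2, C, hcomp, hmono, hcover, hopen⟩ := hA
  haveI := hT2
  classical
  rcases B.eq_empty_or_nonempty with rfl | ⟨b0, hb0⟩
  · refine ⟨∅, isOpen_empty, Set.Subset.rfl,
      fun z => absurd z.2 (Set.notMem_empty z.1), ?_, ?_⟩
    · rw [continuous_def]
      intro s _
      have he : ∀ t : Set (↥(∅ : Set A)), t = ∅ :=
        fun t => Set.eq_empty_of_forall_notMem fun z _ => absurd z.2 (Set.notMem_empty z.1)
      rw [he ((fun z => absurd z.2 (Set.notMem_empty z.1)) ⁻¹' s)]; exact isOpen_empty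
    · intro a haB _; exact absurd haB (Set.notMem_empty a)
  · set F : A → X := fun a => if ha : a ∈ B then f ⟨a, ha⟩ else f ⟨b0, hb0⟩ with hFdef
    have hFB : ∀ (a) (ha : a ∈ B), F a = f ⟨a, ha⟩ := fun a ha => dif_pos ha
    have hFc : ContinuousOn F B := by
      rw [continuousOn_iff_continuous_restrict]
      have : B.domRestrict F = f := by
        funext z
        rw [Set.restrict_apply, hFB z.1 z.2]
      rw [this]; exact hf
    -- construct the sequence of partial extensions
    set Good : ℕ → Set A × (A → X) × Set A → Prop := fun n p =>
      IsCompact p.1 ∧ p.1 ⊆ C n ∧ ContinuousOn p.2.1 p.1 ∧ Set.EqOn p.2.1 F (B ∩ p.1) ∧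
        IsOpen p.2.2 ∧ B ∩ C n ⊆ p.2.2 ∧ p.2.2 ∩ C n ⊆ p.1 with hGoodDef
    set R : ℕ → Set A × (A → X) × Set A → Set A × (A → X) × Set A → Prop :=
      fun _ p q => p.1 ⊆ q.2.2 ∧ Set.EqOn q.2.1 p.2.1 p.1 with hRDef
    obtain ⟨D0, g0, U0, hc0, hs0, hco0, hF0, hUo0, hEU0, hUD0, _⟩ :=
      step_aux' h hBc hFc (hcomp 0) isCompact_empty (Set.empty_subset _)
        (continuousOn_empty F) (fun a ha => absurd ha.2 (Set.notMem_empty a))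
    have hbase : Good 0 (D0, g0, U0) :=
      ⟨hc0, hs0, hco0, hF0, hUo0, fun a ha => hEU0 (Or.inl ha), hUD0⟩
    have hstep : ∀ n p, Good n p → ∃ q, Good (n+1) q ∧ R n p q := by
      rintro n ⟨D, g, U⟩ ⟨hDc, hDC, hgc, hgF, -, -, -⟩
      obtain ⟨D', g', U', hc', hs', hco', hF', hUo', hEU', hUD', hgg'⟩ :=
        step_aux' h hBc hFc (hcomp (n+1)) hDc (hDC.trans (hmono (Nat.le_succ n))) hgc hgF
      exact ⟨⟨D', g', U'⟩, ⟨hc', hs', hco', hF', hUo',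
        fun a ha => hEU' (Or.inl ha), hUD'⟩, fun a ha => hEU' (Or.inr ha), hgg'⟩
    obtain ⟨u, -, hGood, hR⟩ := seq_construct' (D0, g0, U0) hbase hstep
    set Dn : ℕ → Set A := fun n => (u n).1 with hDnDef
    set gn : ℕ → A → X := fun n => (u n).2.1 with hgnDef
    set Un : ℕ → Set A := fun n => (u n).2.2 with hUnDef
    have hDC : ∀ n, Dn n ⊆ C n := fun n => (hGood n).2.1
    have hgc : ∀ n, ContinuousOn (gn n) (Dn n) := fun n => (hGood n).2.2.1
    have hgFn : ∀ n, Set.EqOn (gn n) F (B ∩ Dn n) := fun n => (hGood n).2.2.2.1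
    have hUo : ∀ n, IsOpen (Un n) := fun n => (hGood n).2.2.2.2.1
    have hBU : ∀ n, B ∩ C n ⊆ Un n := fun n => (hGood n).2.2.2.2.2.1
    have hUD : ∀ n, Un n ∩ C n ⊆ Dn n := fun n => (hGood n).2.2.2.2.2.2
    have hDU : ∀ n, Dn n ⊆ Un (n+1) := fun n => (hR n).1
    have hgsucc : ∀ n, Set.EqOn (gn (n+1)) (gn n) (Dn n) := fun n => (hR n).2
    have hUCmono : Monotone (fun n => Un n ∩ C n) := by
      apply monotone_nat_of_le_succ
      intro n a ha
      exact ⟨hDU n (hUD n ha), hmono (Nat.le_succ n) ha.2⟩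
    have hDmono : Monotone Dn := by
      apply monotone_nat_of_le_succ
      intro n a ha
      exact hUD (n+1) ⟨hDU n ha, hmono (Nat.le_succ n) (hDC n ha)⟩
    have hgeq : ∀ n k, n ≤ k → Set.EqOn (gn k) (gn n) (Dn n) := by
      intro n k hnk
      induction k, hnk using Nat.le_induction with
      | base => exact fun a _ => rfl
      | succ k hk ih =>
        exact fun a ha => (hgsucc k (hDmono hk ha)).trans (ih ha)
    set N : Set A := ⋃ n, Un n ∩ C n with hNdef
    have hbump : ∀ (a : A) (m : ℕ), a ∈ N → a ∈ C m → ∃ j, m ≤ j ∧ a ∈ Un j ∩ C j := by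
      intro a m haN _
      obtain ⟨n, hn⟩ := Set.mem_iUnion.mp haN
      exact ⟨max n m, le_max_right n m, hUCmono (le_max_left n m) hn⟩
    have hNopen : IsOpen N := by
      rw [hopen]
      intro m
      have heq : (Subtype.val ⁻¹' N : Set (C m)) = Subtype.val ⁻¹' (⋃ k, Un (k + m)) := by
        ext z
        simp only [Set.mem_preimage, Set.mem_iUnion]
        constructor
        · intro hz
          obtain ⟨j, hmj, hjU, -⟩ := hbump z.1 m hz z.2
          exact ⟨j - m, by rwa [Nat.sub_add_cancel hmj]⟩
        · rintro ⟨k, hk⟩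
          exact Set.mem_iUnion.mpr ⟨k + m, hk, hmono (Nat.le_add_left m k) z.2⟩
      rw [heq]
      exact (isOpen_iUnion fun k => hUo (k + m)).preimage continuous_subtype_val
    have hBN : B ⊆ N := by
      intro a ha
      have : a ∈ ⋃ n, C n := by rw [hcover]; trivial
      obtain ⟨n, hn⟩ := Set.mem_iUnion.mp this
      exact Set.mem_iUnion.mpr ⟨n, hBU n ⟨ha, hn⟩, hn⟩
    set G : A → X := fun a => if hx : ∃ n, a ∈ Dn n then gn (Nat.find hx) a else F a
      with hGdef
    have hGD : ∀ (n : ℕ) (a : A), a ∈ Dn n → G a = gn n a := by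
      intro n a ha
      have hx : ∃ k, a ∈ Dn k := ⟨n, ha⟩
      simp only [hGdef, dif_pos hx]
      exact (hgeq (Nat.find hx) n (Nat.find_min' hx ha) (Nat.find_spec hx)).symm
    refine ⟨N, hNopen, hBN, fun z => G z.1, ?_, ?_⟩
    · rw [continuous_def]
      intro V hV
      have hO : ∀ j, ∃ O, IsOpen O ∧ gn j ⁻¹' V ∩ Dn j = O ∩ Dn j :=
        fun j => (continuousOn_iff'.mp (hgc j)) V hV
      choose O hOo hOe using hO
      have key : IsOpen {a | a ∈ N ∧ G a ∈ V} := by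
        rw [hopen]
        intro m
        have heq : (Subtype.val ⁻¹' {a | a ∈ N ∧ G a ∈ V} : Set (C m)) =
            Subtype.val ⁻¹' (⋃ k, Un (k + m) ∩ O (k + m)) := by
          ext z
          simp only [Set.mem_preimage, Set.mem_setOf_eq, Set.mem_iUnion, Set.mem_inter_iff]
          constructor
          · rintro ⟨hzN, hzV⟩
            obtain ⟨j, hmj, hjU, hjC⟩ := hbump z.1 m hzN z.2
            have hzD : z.1 ∈ Dn j := hUD j ⟨hjU, hjC⟩
            have hzO : z.1 ∈ O j ∩ Dn j := by
              rw [← hOe j]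
              exact ⟨by rw [Set.mem_preimage, ← hGD j z.1 hzD]; exact hzV, hzD⟩
            refine ⟨j - m, ?_, ?_⟩ <;> rw [Nat.sub_add_cancel hmj]
            exacts [hjU, hzO.1]
          · rintro ⟨k, hkU, hkO⟩
            have hzC : z.1 ∈ C (k + m) := hmono (Nat.le_add_left m k) z.2
            have hzD : z.1 ∈ Dn (k + m) := hUD (k + m) ⟨hkU, hzC⟩
            have hzV : z.1 ∈ gn (k + m) ⁻¹' V ∩ Dn (k + m) := by
              rw [hOe (k + m)]; exact ⟨hkO, hzD⟩
            exact ⟨Set.mem_iUnion.mpr ⟨k + m, hkU, hzC⟩,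
              by rw [hGD (k + m) z.1 hzD]; exact hzV.1⟩
        rw [heq]
        exact (isOpen_iUnion fun k => (hUo (k + m)).inter (hOo (k + m))).preimage
          continuous_subtype_val
      have hpre : (fun z : N => G z.1) ⁻¹' V = Subtype.val ⁻¹' {a | a ∈ N ∧ G a ∈ V} := by
        ext z
        simp only [Set.mem_preimage, Set.mem_setOf_eq]
        exact ⟨fun hz => ⟨z.2, hz⟩, fun hz => hz.2⟩
      rw [hpre]
      exact key.preimage continuous_subtype_val
    · intro a haB haN
      have : a ∈ ⋃ n, C n := by rw [hcover]; trivial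
      obtain ⟨n, hn⟩ := Set.mem_iUnion.mp this
      have haD : a ∈ Dn n := hUD n ⟨hBU n ⟨haB, hn⟩, hn⟩
      show G a = f ⟨a, haB⟩
      rw [hGD n a haD, hgFn n ⟨haB, haD⟩, hFB a haB]
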